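/- Let X be a nonempty locally compact Hausdorff space and A a C*-algebra. If C₀(X,A) has the centre-quotient property, then A has the centre-quotient property. -/

import Mathlib

open scoped ZeroAtInfty Pointwise

/-- A topological (possibly non-unital) ring `B` has the *centre-quotient property* if for
every closed two-sided ideal `I` of `B`, the centre of the quotient `B/I` equals the image
of `Z(B) + I` under the quotient map. -/
def HasCentreQuotientProperty (B : Type*) [NonUnitalNonAssocRing B] [TopologicalSpace B] :
    Prop :=
  ∀ I : TwoSidedIdeal B, IsClosed (I : Set B) →
    {z : I.ringCon.Quotient | ∀ w : I.ringCon.Quotient, w * z = z * w} =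
      (fun b : B => (b : I.ringCon.Quotient)) ''
        ({z : B | ∀ b : B, b * z = z * b} + (I : Set B))

section Aux

variable {X A : Type*} [TopologicalSpace X] [LocallyCompactSpace X] [T2Space X]
    [NonUnitalNormedRing A] [NormedSpace ℝ A] [IsScalarTower ℝ A A] [SMulCommClass ℝ A A]

/-- Evaluation at a point as a non-unital ring hom. -/
def evalHom (x₀ : X) : C₀(X, A) →ₙ+* A where
  toFun F := F x₀
  map_add' _ _ := rfl
  map_mul' _ _ := rfl
  map_zero' := rfl

/-- The "bump times `a`" element of `C₀(X, A)`. -/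
noncomputable def bumpSmul (f : C(X, ℝ)) (hf : HasCompactSupport f) (a : A) : C₀(X, A) where
  toFun x := f x • a
  continuous_toFun := f.continuous.smul continuous_const
  zero_at_infty' := by
    simpa using hf.is_zero_at_infty.smul_const a

@[simp] lemma bumpSmul_apply (f : C(X, ℝ)) (hf : HasCompactSupport f) (a : A) (x : X) :
    bumpSmul f hf a x = f x • a := rfl

end Aux

/-- For a nonempty locally compact Hausdorff space `X` and a C*-algebra
`A`, if `C₀(X, A)` has the centre-quotient property, then so does `A`. -/
theorem stmt10 {X A : Type*} [TopologicalSpace X] [LocallyCompactSpace X] [T2Space X]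
    [Nonempty X]
    [NonUnitalNormedRing A] [StarRing A] [CStarRing A] [NormedSpace ℂ A]
    [IsScalarTower ℂ A A] [SMulCommClass ℂ A A] [StarModule ℂ A] [CompleteSpace A]
    (h : HasCentreQuotientProperty C₀(X, A)) :
    HasCentreQuotientProperty A := by
  intro I hI
  ext z
  constructor
  · -- hard direction
    intro hz
    obtain ⟨a, rfl⟩ := Quotient.mk''_surjective z
    have ha : ∀ c : A, c * a - a * c ∈ I := by
      intro c
      have h1 : ((c * a : A) : I.ringCon.Quotient) = ((a * c : A) : I.ringCon.Quotient) :=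
        hz (c : I.ringCon.Quotient)
      rwa [RingCon.eq, I.rel_iff] at h1
    -- the point and the bump
    obtain x₀ : X := Classical.arbitrary X
    obtain ⟨f, hf1, -, hfc, -⟩ := exists_continuous_one_zero_of_isCompact
      (isCompact_singleton (x := x₀)) isClosed_empty (Set.disjoint_empty _)
    have hfx₀ : f x₀ = 1 := hf1 rfl
    -- the pulled-back ideal
    set J : TwoSidedIdeal C₀(X, A) := I.comap (evalHom x₀) with hJ
    have hmemJ : ∀ F : C₀(X, A), F ∈ J ↔ F x₀ ∈ I := fun F => TwoSidedIdeal.mem_comap (evalHom x₀)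
    have hJc : IsClosed (J : Set C₀(X, A)) := by
      have : (J : Set C₀(X, A)) = (fun F : C₀(X, A) => F x₀) ⁻¹' (I : Set A) := by
        ext F; exact hmemJ F
      rw [this]
      exact hI.preimage <| (continuous_eval_const (F := BoundedContinuousFunction X A) x₀).comp
        (ZeroAtInftyContinuousMap.isometry_toBCF (α := X) (β := A)).continuous
    set F : C₀(X, A) := bumpSmul f hfc a with hF
    have hFx₀ : F x₀ = a := by simp [hF, hfx₀]
    have hFc : ((F : C₀(X, A)) : J.ringCon.Quotient) ∈
        {z : J.ringCon.Quotient | ∀ w, w * z = z * w} := by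
      intro w
      obtain ⟨G, rfl⟩ := Quotient.mk''_surjective w
      show ((G * F : C₀(X, A)) : J.ringCon.Quotient) = ((F * G : C₀(X, A)) : J.ringCon.Quotient)
      rw [RingCon.eq, J.rel_iff, hmemJ]
      have : (G * F - F * G) x₀ = G x₀ * a - a * G x₀ := by
        simp [hF, hfx₀]
      rw [this]
      exact ha (G x₀)
    rw [h J hJc] at hFc
    obtain ⟨b, hb, hbF⟩ := hFc
    obtain ⟨g, hg, k, hk, rfl⟩ := hb
    rw [RingCon.eq, J.rel_iff, hmemJ] at hbF
    have hgk : g x₀ + k x₀ - a ∈ I := by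
      have : (g + k - F) x₀ = g x₀ + k x₀ - a := by simp [hFx₀]
      rwa [this] at hbF
    have hkx₀ : k x₀ ∈ I := (hmemJ k).mp hk
    have hIa : a - g x₀ ∈ I := by
      have h2 := I.sub_mem hkx₀ hgk
      have h3 : k x₀ - (g x₀ + k x₀ - a) = a - g x₀ := by abel
      rwa [h3] at h2
    have hgc : g x₀ ∈ {z : A | ∀ b : A, b * z = z * b} := by
      intro b
      have h4 := congrArg (fun F : C₀(X, A) => F x₀) (hg (bumpSmul f hfc b))
      simpa [hfx₀] using h4
    refine ⟨a, ?_, rfl⟩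
    have h5 : a = g x₀ + (a - g x₀) := by abel
    exact h5 ▸ Set.add_mem_add hgc hIa
  · rintro ⟨b, hb, rfl⟩
    obtain ⟨zc, hzc, i, hi, rfl⟩ := Set.mem_add.mp hb
    intro w
    obtain ⟨c, rfl⟩ := Quotient.mk''_surjective w
    show ((c * (zc + i) : A) : I.ringCon.Quotient) = (((zc + i) * c : A) : I.ringCon.Quotient)
    rw [RingCon.eq, I.rel_iff]
    have hd : c * (zc + i) - (zc + i) * c = c * i - i * c := by
      rw [mul_add, add_mul, hzc c]; abel
    rw [hd]
    exact I.sub_mem (I.mul_mem_left _ _ hi) (I.mul_mem_right _ _ hi)
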